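/- Let m ≥ 1 and k ≥ 1 be integers, let P₁, P₂ ∈ B₃⁺, set P = P₁·a₁·(a₁·a₂·⋯·a_{2k})·a_{2k}·P₂ (generator indices modulo 3; for k = 1 the inserted subword is a₁²·a₂²) and α = δ^{−m}·P. Suppose π(α) is a 3-cycle, α is a summit element with summit exponent −m, m ≥ 2k + 1, and m ≤ e(P) − 1. Then min{|β| : β is conjugate to α} = e(P), and there exists a list s of elements of {a_i, a_i⁻¹ : i ∈ ZMod 3} of length e(P) − (2k+2) such that a₁·a₂^{−2k}·a₁⁻¹·(∏s) is conjugate to α; that is, α is conjugate to a₁a₂^{−2k}a₁⁻¹W which is a shortest word in its conjugacy class. -/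

import Mathlib

namespace Braid

/-- Relations of the dual (band-generator) presentation of the 3-braid group:
`a (i+1) * a i = a (i+2) * a (i+1)` for all `i : ZMod 3`. -/
def braidRels : Set (FreeGroup (ZMod 3)) :=
  { r | ∃ i : ZMod 3,
      r = FreeGroup.of (i + 1) * FreeGroup.of i *
          (FreeGroup.of (i + 2) * FreeGroup.of (i + 1))⁻¹ }

/-- The 3-braid group with the band-generator presentation. -/
abbrev B3 := PresentedGroup braidRels

/-- The band generators `a i`, `i : ZMod 3`. -/
def a (i : ZMod 3) : B3 := PresentedGroup.of i

/-- The fundamental element `δ = a₂ * a₁`. -/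
def δ : B3 := a 2 * a 1

/-- The submonoid of positive braids. -/
def Pos : Submonoid B3 := Submonoid.closure (Set.range a)

/-- The exponent-sum homomorphism, sending each generator to `1 : ℤ`. -/
def eHom : B3 →* Multiplicative ℤ :=
  PresentedGroup.toGroup (f := fun _ => Multiplicative.ofAdd (1 : ℤ)) (by
    rintro r ⟨i, rfl⟩
    simp only [map_mul, map_inv, FreeGroup.lift_apply_of]
    group)

/-- The exponent sum (letter length on positive braids) as an integer. -/
def elen (x : B3) : ℤ := Multiplicative.toAdd (eHom x)

/-- The right complement `X* = X⁻¹ * δ^{e(X)}`. -/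
def rc (X : B3) : B3 := X⁻¹ * δ ^ elen X

/-- The `n`-th power of the rotation automorphism `τ`: `τ^n (x) = δ^{-n} * x * δ^n`. -/
def tauPow (n : ℤ) (x : B3) : B3 := δ ^ (-n) * x * δ ^ n

/-- The positive braid represented by a list of generator indices. -/
def wordProd (l : List (ZMod 3)) : B3 := (l.map a).prod

/-- A word is nondecreasing if each letter index is the previous one or the previous one
plus `1` (mod 3). -/
def NDWord (l : List (ZMod 3)) : Prop :=
  l.Chain' (fun x y => y = x ∨ y = x + 1)

/-- The syllable number of a word: the number of maximal constant blocks. -/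
def syl : List (ZMod 3) → ℕ
  | [] => 0
  | [_] => 1
  | x :: y :: t => (if x = y then 0 else 1) + syl (y :: t)

/-- The permutations underlying the band generators. -/
def perm3 (i : ZMod 3) : Equiv.Perm (Fin 3) :=
  if i = 0 then Equiv.swap 0 2 else if i = 1 then Equiv.swap 0 1 else Equiv.swap 1 2

lemma perm3_rel : ∀ i : ZMod 3,
    perm3 (i + 1) * perm3 i * (perm3 (i + 2) * perm3 (i + 1))⁻¹ = 1 := by decide

/-- The homomorphism to the symmetric group on 3 letters (underlying permutation). -/
def permOf : B3 →* Equiv.Perm (Fin 3) :=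
  PresentedGroup.toGroup (f := perm3) (by
    rintro r ⟨i, rfl⟩
    simp only [map_mul, map_inv, FreeGroup.lift_apply_of]
    exact perm3_rel i)

/-- The set of band generators and their inverses. -/
def genSet : Set B3 := Set.range a ∪ Set.range (fun i => (a i)⁻¹)

/-- The band-generator word length of a 3-braid. -/
noncomputable def wordLen (x : B3) : ℕ :=
  sInf { n | ∃ s : List B3, s.length = n ∧ (∀ g ∈ s, g ∈ genSet) ∧ s.prod = x }

/-- The minimal band-generator word length in the conjugacy class. -/
noncomputable def minConjLen (x : B3) : ℕ :=
  sInf { n | ∃ y, IsConj x y ∧ wordLen y = n }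

/-- `α` is a summit element with summit exponent `u` if `δ^{-u} * α` is positive and `u` is
the maximal such exponent over the conjugacy class. -/
def IsSummit (α : B3) (u : ℤ) : Prop :=
  δ ^ (-u) * α ∈ Pos ∧ ∀ β : B3, IsConj α β → ∀ v : ℤ, δ ^ (-v) * β ∈ Pos → v ≤ u

lemma braid_rel (i : ZMod 3) : a (i + 1) * a i = a (i + 2) * a (i + 1) := by
  have h : PresentedGroup.mk braidRels
      (FreeGroup.of (i + 1) * FreeGroup.of i *
        (FreeGroup.of (i + 2) * FreeGroup.of (i + 1))⁻¹) = 1 := by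
    apply (QuotientGroup.eq_one_iff _).mpr
    exact Subgroup.subset_normalClosure ⟨i, rfl⟩
  simp only [map_mul, map_inv, mul_inv_eq_one] at h
  exact h

lemma delta_eq (i : ZMod 3) : a (i + 1) * a i = δ := by
  have h0 := braid_rel 0
  have h1 := braid_rel 1
  have h2 := braid_rel 2
  norm_num at h0 h1 h2
  have e3 : (3 : ZMod 3) = 0 := by decide
  have e4 : (4 : ZMod 3) = 1 := by decide
  simp only [e3, e4] at h1 h2
  rcases (by decide : ∀ j : ZMod 3, j = 0 ∨ j = 1 ∨ j = 2) i with rfl | rfl | rfl <;>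
    simp [show ((0:ZMod 3)+1) = 1 from by decide, show ((1:ZMod 3)+1) = 2 from by decide,
      show ((2:ZMod 3)+1) = 0 from by decide, δ, h0, h1, ← h2]

lemma delta_eq' (i : ZMod 3) : a (i + 2) * a (i + 1) = δ := by
  have := delta_eq (i + 1)
  rwa [show i + 1 + 1 = i + 2 by ring] at this

lemma delta_mul_a (i : ZMod 3) : δ * a i = a (i + 2) * δ := by
  conv_lhs => rw [← delta_eq' i]
  rw [mul_assoc, delta_eq i]

lemma a_inv (i : ZMod 3) : (a i)⁻¹ = δ⁻¹ * a (i + 1) := by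
  rw [← delta_eq i]
  group

lemma h3 : (3 : ZMod 3) = 0 := by decide

lemma inv_delta_mul_a (j : ZMod 3) : δ⁻¹ * a j = a (j + 1) * δ⁻¹ := by
  have h := delta_mul_a (j + 1)
  rw [show ∀ x : ZMod 3, x + 1 + 2 = x from by decide] at h
  calc δ⁻¹ * a j = δ⁻¹ * (a j * δ) * δ⁻¹ := by group
    _ = δ⁻¹ * (δ * a (j + 1)) * δ⁻¹ := by rw [h]
    _ = a (j + 1) * δ⁻¹ := by group

lemma zc (t : ℤ) (i : ZMod 3) : δ ^ t * a i = a (i + 2 * (t : ZMod 3)) * δ ^ t := by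
  induction t using Int.induction_on generalizing i with
  | zero => simp
  | succ n ih =>
    calc δ ^ ((n : ℤ) + 1) * a i = δ ^ (n : ℤ) * (δ * a i) := by
          rw [zpow_add_one]; group
      _ = δ ^ (n : ℤ) * a (i + 2) * δ := by rw [delta_mul_a]; group
      _ = a (i + 2 + 2 * ((n : ℤ) : ZMod 3)) * δ ^ (n : ℤ) * δ := by rw [ih]
      _ = a (i + 2 * (((n : ℤ) + 1 : ℤ) : ZMod 3)) * δ ^ ((n : ℤ) + 1) := by
          rw [zpow_add_one]; rw [mul_assoc]; congr 2; push_cast; ring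
  | pred n ih =>
    calc δ ^ (-(n : ℤ) - 1) * a i = δ ^ (-(n : ℤ)) * (δ⁻¹ * a i) := by
          rw [zpow_sub_one]; group
      _ = δ ^ (-(n : ℤ)) * a (i + 1) * δ⁻¹ := by rw [inv_delta_mul_a]; group
      _ = a (i + 1 + 2 * ((-(n : ℤ) : ℤ) : ZMod 3)) * δ ^ (-(n : ℤ)) * δ⁻¹ := by rw [ih]
      _ = a (i + 2 * ((-(n : ℤ) - 1 : ℤ) : ZMod 3)) * δ ^ (-(n : ℤ) - 1) := by
          rw [zpow_sub_one, mul_assoc]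
          congr 2
          push_cast
          linear_combination h3


lemma eHom_a (i : ZMod 3) : eHom (a i) = Multiplicative.ofAdd (1 : ℤ) :=
  PresentedGroup.toGroup.of _

lemma elen_a (i : ZMod 3) : elen (a i) = 1 := by
  simp [elen, eHom_a]

lemma elen_mul (x y : B3) : elen (x * y) = elen x + elen y := by
  simp [elen, map_mul]

lemma elen_one : elen 1 = 0 := by simp [elen]

lemma elen_inv (x : B3) : elen x⁻¹ = - elen x := by simp [elen]

lemma eHom_delta : eHom δ = Multiplicative.ofAdd (2 : ℤ) := by
  rw [δ, map_mul, eHom_a, eHom_a, ← ofAdd_add]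
  norm_num

lemma elen_delta_zpow (t : ℤ) : elen (δ ^ t) = 2 * t := by
  rw [elen, map_zpow, eHom_delta, ← ofAdd_zsmul]
  simp [mul_comm]

lemma elen_conj (g x : B3) : elen (g * x * g⁻¹) = elen x := by
  rw [elen_mul, elen_mul, elen_inv]
  ring

lemma wordProd_nil : wordProd [] = 1 := rfl

lemma wordProd_cons (i : ZMod 3) (l : List (ZMod 3)) :
    wordProd (i :: l) = a i * wordProd l := by simp [wordProd]

lemma wordProd_append (l₁ l₂ : List (ZMod 3)) :
    wordProd (l₁ ++ l₂) = wordProd l₁ * wordProd l₂ := by simp [wordProd]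

lemma wordProd_concat (l : List (ZMod 3)) (i : ZMod 3) :
    wordProd (l.concat i) = wordProd l * a i := by simp [wordProd]

lemma elen_wordProd (l : List (ZMod 3)) : elen (wordProd l) = l.length := by
  induction l with
  | nil => simp [wordProd_nil, elen_one]
  | cons i t ih => rw [wordProd_cons, elen_mul, elen_a, ih, List.length_cons]; push_cast; ring

lemma zc_word (t : ℤ) (l : List (ZMod 3)) :
    δ ^ t * wordProd l = wordProd (l.map (fun x => x + 2 * (t : ZMod 3))) * δ ^ t := by
  induction l with
  | nil => simp [wordProd_nil]
  | cons i r ih =>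
    rw [wordProd_cons, List.map_cons, wordProd_cons, ← mul_assoc, zc t i,
      mul_assoc, ih, ← mul_assoc]

lemma a_mem_Pos (i : ZMod 3) : a i ∈ Pos := Submonoid.subset_closure ⟨i, rfl⟩

lemma wordProd_mem_Pos (l : List (ZMod 3)) : wordProd l ∈ Pos := by
  induction l with
  | nil => exact one_mem _
  | cons i t ih => rw [wordProd_cons]; exact mul_mem (a_mem_Pos i) ih

lemma list_range_word : ∀ L : List B3, (∀ y ∈ L, y ∈ Set.range a) →
    ∃ l : List (ZMod 3), wordProd l = L.prod := by
  intro L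
  induction L with
  | nil => exact fun _ => ⟨[], rfl⟩
  | cons g t ih =>
    intro h
    obtain ⟨i, hi⟩ := h g List.mem_cons_self
    obtain ⟨l, hl⟩ := ih fun y hy => h y (List.mem_cons_of_mem g hy)
    exact ⟨i :: l, by rw [wordProd_cons, hi, hl, List.prod_cons]⟩

lemma exists_word_of_Pos {x : B3} (h : x ∈ Pos) : ∃ l, wordProd l = x := by
  obtain ⟨L, hL, hprod⟩ := Submonoid.exists_list_of_mem_closure h
  obtain ⟨l, hl⟩ := list_range_word L hL
  exact ⟨l, by rw [hl, hprod]⟩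

lemma a_mem_genSet (i : ZMod 3) : a i ∈ genSet := Or.inl ⟨i, rfl⟩

lemma a_inv_mem_genSet (i : ZMod 3) : (a i)⁻¹ ∈ genSet := Or.inr ⟨i, rfl⟩

lemma exists_word (y : B3) : ∃ s : List B3, (∀ g ∈ s, g ∈ genSet) ∧ s.prod = y := by
  induction y using PresentedGroup.induction_on with
  | _ z =>
    induction z using FreeGroup.induction_on with
    | C1 => exact ⟨[], by simp⟩
    | of x => exact ⟨[a x], by simp [a_mem_genSet], by simp; rfl⟩
    | inv_of x => exact ⟨[(a x)⁻¹], by simp [a_inv_mem_genSet], by simp [map_inv]; rfl⟩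
    | mul x y hx hy =>
      obtain ⟨s₁, hs₁, hp₁⟩ := hx
      obtain ⟨s₂, hs₂, hp₂⟩ := hy
      refine ⟨s₁ ++ s₂, ?_, ?_⟩
      · intro g hg
        rcases List.mem_append.mp hg with h | h
        exacts [hs₁ g h, hs₂ g h]
      · rw [List.prod_append, hp₁, hp₂, map_mul]


lemma zc_inv (t : ℤ) (i : ZMod 3) :
    δ ^ t * (a i)⁻¹ = (a (i + 2 * (t : ZMod 3)))⁻¹ * δ ^ t := by
  have h : δ ^ t * a i * (δ ^ t)⁻¹ = a (i + 2 * (t : ZMod 3)) := by rw [zc]; group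
  calc δ ^ t * (a i)⁻¹ = (δ ^ t * a i * (δ ^ t)⁻¹)⁻¹ * δ ^ t := by group
    _ = (a (i + 2 * (t : ZMod 3)))⁻¹ * δ ^ t := by rw [h]

lemma step_id : (a 1)⁻¹ * (a 2)⁻¹ * a 0 = (a 2)⁻¹ * (a 1)⁻¹ * (a 2)⁻¹ * δ := by
  have h := delta_mul_a 1
  rw [show (1 : ZMod 3) + 2 = 0 from by decide] at h
  have ha0 : a 0 = δ * a 1 * δ⁻¹ := by rw [h]; group
  rw [ha0, δ]
  group

lemma prefix_eq (j : ℕ) :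
    wordProd (List.ofFn (fun t : Fin j => ((t : ℕ) : ZMod 3) + 1)) =
      (a 2) ^ (-(j : ℤ)) * (a 1)⁻¹ * (a 2)⁻¹ * δ ^ ((j : ℤ) + 1) := by
  induction j with
  | zero =>
    simp only [List.ofFn_zero, wordProd_nil, Nat.cast_zero, neg_zero, zpow_zero, one_mul,
      zero_add, zpow_one, δ]
    group
  | succ j ih =>
    rw [List.ofFn_succ']
    simp only [Fin.coe_castSucc, Fin.val_last]
    rw [wordProd_concat, ih]
    have hz := zc ((j : ℤ) + 1) (((j : ℕ) : ZMod 3) + 1)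
    rw [show (((j : ℕ) : ZMod 3) + 1) + 2 * ((((j : ℤ) + 1) : ℤ) : ZMod 3) = 0 from by
      push_cast; linear_combination (((j : ℕ) : ZMod 3) + 1) * h3] at hz
    calc (a 2) ^ (-(j : ℤ)) * (a 1)⁻¹ * (a 2)⁻¹ * δ ^ ((j : ℤ) + 1) * a (((j : ℕ) : ZMod 3) + 1)
        = (a 2) ^ (-(j : ℤ)) * ((a 1)⁻¹ * (a 2)⁻¹ * a 0) * δ ^ ((j : ℤ) + 1) := by
          rw [mul_assoc ((a 2) ^ (-(j : ℤ)) * (a 1)⁻¹ * (a 2)⁻¹) (δ ^ ((j : ℤ) + 1)), hz]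
          group
      _ = (a 2) ^ (-(j : ℤ)) * ((a 2)⁻¹ * (a 1)⁻¹ * (a 2)⁻¹ * δ) * δ ^ ((j : ℤ) + 1) := by
          rw [step_id]
      _ = (a 2) ^ (-((j + 1 : ℕ) : ℤ)) * (a 1)⁻¹ * (a 2)⁻¹ * δ ^ (((j + 1 : ℕ) : ℤ) + 1) := by
          push_cast
          group

lemma prefix_mul (j : ℕ) :
    wordProd (List.ofFn (fun t : Fin j => ((t : ℕ) : ZMod 3) + 1)) * a ((j : ℕ) : ZMod 3) =
      (a 2) ^ (-(j : ℤ)) * (a 1)⁻¹ * δ ^ ((j : ℤ) + 1) := by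
  rw [prefix_eq]
  have hz := zc ((j : ℤ) + 1) ((j : ℕ) : ZMod 3)
  rw [show ((j : ℕ) : ZMod 3) + 2 * ((((j : ℤ) + 1) : ℤ) : ZMod 3) = 2 from by
    push_cast; linear_combination ((j : ℕ) : ZMod 3) * h3] at hz
  rw [mul_assoc ((a 2) ^ (-(j : ℤ)) * (a 1)⁻¹ * (a 2)⁻¹) (δ ^ ((j : ℤ) + 1)), hz]
  group

lemma exists_word_delta_neg :
    ∀ (l : List (ZMod 3)) (r : ℕ), r ≤ l.length →
      ∃ s : List B3, (∀ g ∈ s, g ∈ genSet) ∧ s.length = l.length ∧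
        s.prod = δ ^ (-(r : ℤ)) * wordProd l := by
  intro l
  induction l with
  | nil =>
    intro r hr
    obtain rfl : r = 0 := Nat.le_zero.mp hr
    exact ⟨[], by simp, by simp, by simp [wordProd_nil]⟩
  | cons i t ih =>
    intro r hr
    match r with
    | 0 =>
      refine ⟨(i :: t).map a, ?_, by simp, by simp [wordProd]⟩
      intro g hg
      obtain ⟨x, _, rfl⟩ := List.mem_map.mp hg
      exact a_mem_genSet x
    | (r' + 1) =>
      obtain ⟨s', hs', hlen', hprod'⟩ := ih r' (by simpa using hr)
      refine ⟨(a ((i - 1) + 2 * ((-(r' : ℤ) : ℤ) : ZMod 3)))⁻¹ :: s', ?_, by simp [hlen'], ?_⟩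
      · intro g hg
        rcases List.mem_cons.mp hg with rfl | hg
        · exact a_inv_mem_genSet _
        · exact hs' g hg
      · have hinv := zc_inv (-(r' : ℤ)) (i - 1)
        have hai : (a (i - 1))⁻¹ = δ⁻¹ * a i := by
          rw [a_inv (i - 1), show i - 1 + 1 = i from by ring]
        calc ((a ((i - 1) + 2 * ((-(r' : ℤ) : ℤ) : ZMod 3)))⁻¹ :: s').prod
            = (a ((i - 1) + 2 * ((-(r' : ℤ) : ℤ) : ZMod 3)))⁻¹ * δ ^ (-(r' : ℤ)) *
                wordProd t := by rw [List.prod_cons, hprod']; group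
          _ = δ ^ (-(r' : ℤ)) * (a (i - 1))⁻¹ * wordProd t := by rw [← hinv]
          _ = δ ^ (-(r' : ℤ)) * (δ⁻¹ * a i) * wordProd t := by rw [hai]
          _ = δ ^ (-((r' : ℕ) + 1 : ℕ) : ℤ) * wordProd (i :: t) := by
              rw [wordProd_cons,
                show (-((r' : ℕ) + 1 : ℕ) : ℤ) = -(r' : ℤ) + (-1) from by push_cast; ring,
                zpow_add, zpow_neg_one]
              group

lemma word_to_normal :
    ∀ s : List B3, (∀ g ∈ s, g ∈ genSet) →
      ∃ (q : ℕ) (l : List (ZMod 3)), l.length = s.length ∧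
        s.prod = δ ^ (-(q : ℤ)) * wordProd l := by
  intro s
  induction s with
  | nil => exact fun _ => ⟨0, [], by simp, by simp [wordProd_nil]⟩
  | cons g t ih =>
    intro hg
    obtain ⟨q, l, hlen, hprod⟩ := ih fun x hx => hg x (List.mem_cons_of_mem g hx)
    have hgmem := hg g List.mem_cons_self
    rcases hgmem with ⟨i, hi⟩ | ⟨i, hi⟩
    · -- g = a i
      have hi' : g = a i := hi.symm
      refine ⟨q, (i - 2 * ((-(q : ℤ) : ℤ) : ZMod 3)) :: l, by simp [hlen], ?_⟩
      have hz := zc (-(q : ℤ)) (i - 2 * ((-(q : ℤ) : ℤ) : ZMod 3))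
      rw [show i - 2 * ((-(q : ℤ) : ℤ) : ZMod 3) + 2 * ((-(q : ℤ) : ℤ) : ZMod 3) = i from by
        ring] at hz
      calc (g :: t).prod = (a i * δ ^ (-(q : ℤ))) * wordProd l := by
            rw [List.prod_cons, hprod, hi']; group
        _ = (δ ^ (-(q : ℤ)) * a (i - 2 * ((-(q : ℤ) : ℤ) : ZMod 3))) * wordProd l := by
            rw [hz]
        _ = δ ^ (-(q : ℤ)) * wordProd ((i - 2 * ((-(q : ℤ) : ℤ) : ZMod 3)) :: l) := by
            rw [wordProd_cons]; group
    · -- g = (a i)⁻¹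
      have hi' : g = (a i)⁻¹ := hi.symm
      refine ⟨q + 1, (i + 1 - 2 * ((-(q : ℤ) : ℤ) : ZMod 3)) :: l, by simp [hlen], ?_⟩
      have hz := zc (-(q : ℤ)) (i + 1 - 2 * ((-(q : ℤ) : ℤ) : ZMod 3))
      rw [show i + 1 - 2 * ((-(q : ℤ) : ℤ) : ZMod 3) + 2 * ((-(q : ℤ) : ℤ) : ZMod 3) = i + 1
        from by ring] at hz
      calc (g :: t).prod = δ⁻¹ * (a (i + 1) * δ ^ (-(q : ℤ))) * wordProd l := by
            rw [List.prod_cons, hprod, hi', a_inv i]; group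
        _ = δ⁻¹ * (δ ^ (-(q : ℤ)) * a (i + 1 - 2 * ((-(q : ℤ) : ℤ) : ZMod 3))) * wordProd l := by
            rw [hz]
        _ = δ ^ (-((q : ℕ) + 1 : ℕ) : ℤ) * wordProd ((i + 1 - 2 * ((-(q : ℤ) : ℤ) : ZMod 3)) :: l) := by
            rw [wordProd_cons,
              show (-((q : ℕ) + 1 : ℕ) : ℤ) = -(q : ℤ) + (-1) from by push_cast; ring,
              zpow_add, zpow_neg_one]
            group


/-- Lemma 4.2(ii): if `α = δ^{-m} P₁ a₁² a₂ ⋯ a_{2k-1} a_{2k}² P₂` is a summit element closing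
to a knot, with `2k+1 ≤ m ≤ |P| - 1`, then `α` is conjugate to `a₁ a₂^{-2k} a₁⁻¹ W` which is
a shortest word in its conjugacy class. -/
theorem lemma_B_ii (m k : ℕ) (hm : 1 ≤ m) (hk : 1 ≤ k) (P₁ P₂ : B3)
    (h₁ : P₁ ∈ Pos) (h₂ : P₂ ∈ Pos) (P α : B3)
    (hP : P = P₁ * a 1 *
        (List.ofFn (fun j : Fin (2 * k) => a (((j : ℕ) : ZMod 3) + 1))).prod *
        a ((2 * k : ℕ) : ZMod 3) * P₂)
    (hα : α = δ ^ (-(m : ℤ)) * P)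
    (h3 : (permOf α).IsThreeCycle)
    (hs : IsSummit α (-(m : ℤ)))
    (hge : 2 * k + 1 ≤ m)
    (hle : (m : ℤ) ≤ elen P - 1) :
    (minConjLen α : ℤ) = elen P ∧
    ∃ s : List B3, (∀ g ∈ s, g ∈ genSet) ∧
      (s.length : ℤ) = elen P - (2 * (k : ℤ) + 2) ∧
      IsConj α (a 1 * (a 2) ^ (-(2 * (k : ℤ))) * (a 1)⁻¹ * s.prod) := by
  classical
  -- the prefix as a wordProd
  set pl : List (ZMod 3) := List.ofFn (fun j : Fin (2 * k) => ((j : ℕ) : ZMod 3) + 1) with hpl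
  have hplprod : (List.ofFn (fun j : Fin (2 * k) => a (((j : ℕ) : ZMod 3) + 1))).prod =
      wordProd pl := by
    rw [wordProd, hpl, List.map_ofFn]
    rfl
  obtain ⟨l₁, hl₁⟩ := exists_word_of_Pos h₁
  obtain ⟨l₂, hl₂⟩ := exists_word_of_Pos h₂
  have hlen1 : ((l₁.length : ℤ)) = elen P₁ := by rw [← hl₁, elen_wordProd]
  have hlen2 : ((l₂.length : ℤ)) = elen P₂ := by rw [← hl₂, elen_wordProd]
  have helen_pref : elen (wordProd pl) = (2 * k : ℤ) := by
    rw [elen_wordProd, hpl, List.length_ofFn]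
    push_cast; ring
  have helenP : elen P = elen P₁ + elen P₂ + 2 * (k : ℤ) + 2 := by
    rw [hP, hplprod, elen_mul, elen_mul, elen_mul, elen_mul, elen_a, elen_a, helen_pref]
    ring
  have helenα : elen α = elen P - 2 * (m : ℤ) := by
    rw [hα, elen_mul, elen_delta_zpow]
    ring
  have h1nonneg : (0 : ℤ) ≤ elen P₁ := by rw [← hlen1]; positivity
  have h2nonneg : (0 : ℤ) ≤ elen P₂ := by rw [← hlen2]; positivity
  -- lower bound
  have lb : ∀ (y : B3), IsConj α y → ∀ s : List B3, (∀ g ∈ s, g ∈ genSet) → s.prod = y →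
      elen P ≤ (s.length : ℤ) := by
    intro y hconj s hgs hsp
    obtain ⟨q, l, hlen, hprod⟩ := word_to_normal s hgs
    have hpos : δ ^ (-(-(q : ℤ))) * y ∈ Pos := by
      rw [neg_neg, ← hsp, hprod, ← mul_assoc, ← zpow_add]
      simp [wordProd_mem_Pos]
    have hq := hs.2 y hconj (-(q : ℤ)) hpos
    have helen_y : elen y = elen P - 2 * (m : ℤ) := by
      obtain ⟨c, hc⟩ := isConj_iff.mp hconj
      rw [← hc, elen_conj, helenα]
    have helen_y' : elen y = -(2 * (q : ℤ)) + l.length := by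
      rw [← hsp, hprod, elen_mul, elen_delta_zpow, elen_wordProd]
      ring
    have hcast : (l.length : ℤ) = (s.length : ℤ) := by exact_mod_cast hlen
    have hmq : (m : ℤ) ≤ (q : ℤ) := by linarith [neg_le_neg_iff.mp hq]
    linarith
  -- the conjugating element and the conjugate normal form
  have hpref2 := prefix_mul (2 * k)
  have hP₂δ : P₂ * δ ^ (-(m : ℤ)) = δ ^ (-(m : ℤ)) *
      wordProd (l₂.map (fun x => x + 2 * (((m : ℕ) : ℤ) : ZMod 3))) := by
    have h := zc_word ((m : ℕ) : ℤ) l₂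
    rw [hl₂] at h
    calc P₂ * δ ^ (-(m : ℤ)) = δ ^ (-(m : ℤ)) * (δ ^ ((m : ℕ) : ℤ) * P₂) * δ ^ (-(m : ℤ)) := by
          group
      _ = δ ^ (-(m : ℤ)) * (wordProd (l₂.map (fun x => x + 2 * (((m : ℕ) : ℤ) : ZMod 3))) *
            δ ^ ((m : ℕ) : ℤ)) * δ ^ (-(m : ℤ)) := by rw [h]
      _ = δ ^ (-(m : ℤ)) * wordProd (l₂.map (fun x => x + 2 * (((m : ℕ) : ℤ) : ZMod 3))) := by
          group
  set lQ : List (ZMod 3) := l₂.map (fun x => x + 2 * (((m : ℕ) : ℤ) : ZMod 3)) ++ l₁ with hlQ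
  have hlQlen : (lQ.length : ℤ) = elen P - (2 * (k : ℤ) + 2) := by
    rw [hlQ, List.length_append, List.length_map, helenP]
    push_cast
    rw [hlen1, hlen2]
    ring
  set r : ℕ := m - (2 * k + 1) with hr
  have hrcast : (r : ℤ) = (m : ℤ) - (2 * (k : ℤ) + 1) := by omega
  have hrle : r ≤ lQ.length := by
    have : (r : ℤ) ≤ (lQ.length : ℤ) := by rw [hrcast, hlQlen]; linarith
    exact_mod_cast this
  obtain ⟨s, hsgen, hslen, hsprod⟩ := exists_word_delta_neg lQ r hrle
  have hslen' : (s.length : ℤ) = elen P - (2 * (k : ℤ) + 2) := by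
    rw [← hlQlen]; exact_mod_cast hslen
  set y₀ : B3 := a 1 * (a 2) ^ (-(2 * (k : ℤ))) * (a 1)⁻¹ * s.prod with hy₀
  have hconjy : IsConj α y₀ := by
    rw [isConj_iff]
    refine ⟨(δ ^ (-(m : ℤ)) * P₁)⁻¹, ?_⟩
    have hz2k : (a 2) ^ (-((2 * k : ℕ) : ℤ)) = (a 2) ^ (-(2 * (k : ℤ))) := by
      norm_cast
    have hδsplit : δ ^ (((2 * k : ℕ) : ℤ) + 1) * δ ^ (-(m : ℤ)) = δ ^ (-(r : ℤ)) := by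
      rw [← zpow_add]
      congr 1
      omega
    calc (δ ^ (-(m : ℤ)) * P₁)⁻¹ * α * ((δ ^ (-(m : ℤ)) * P₁)⁻¹)⁻¹
        = P₁⁻¹ * P * (δ ^ (-(m : ℤ)) * P₁) := by rw [hα]; group
      _ = a 1 * (wordProd pl * a ((2 * k : ℕ) : ZMod 3)) * (P₂ * δ ^ (-(m : ℤ))) * P₁ := by
          rw [hP, hplprod]; group
      _ = a 1 * ((a 2) ^ (-((2 * k : ℕ) : ℤ)) * (a 1)⁻¹ * δ ^ (((2 * k : ℕ) : ℤ) + 1)) *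
            (δ ^ (-(m : ℤ)) * wordProd (l₂.map (fun x => x + 2 * (((m : ℕ) : ℤ) : ZMod 3)))) *
            P₁ := by rw [hpref2, hP₂δ]
      _ = a 1 * (a 2) ^ (-((2 * k : ℕ) : ℤ)) * (a 1)⁻¹ *
            ((δ ^ (((2 * k : ℕ) : ℤ) + 1) * δ ^ (-(m : ℤ))) *
              (wordProd (l₂.map (fun x => x + 2 * (((m : ℕ) : ℤ) : ZMod 3))) * wordProd l₁)) := by
          rw [hl₁]; group
      _ = a 1 * (a 2) ^ (-(2 * (k : ℤ))) * (a 1)⁻¹ * (δ ^ (-(r : ℤ)) * wordProd lQ) := by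
          rw [hz2k, hδsplit, hlQ, wordProd_append]
      _ = y₀ := by rw [hy₀, hsprod]
  -- explicit word for y₀
  set w : List B3 := a 1 :: (List.replicate (2 * k) (a 2)⁻¹ ++ ((a 1)⁻¹ :: s)) with hw
  have hwgen : ∀ g ∈ w, g ∈ genSet := by
    intro g hg
    rw [hw] at hg
    rcases List.mem_cons.mp hg with rfl | hg
    · exact a_mem_genSet 1
    rcases List.mem_append.mp hg with hg | hg
    · rw [List.eq_of_mem_replicate hg]; exact a_inv_mem_genSet 2
    rcases List.mem_cons.mp hg with rfl | hg
    · exact a_inv_mem_genSet 1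
    · exact hsgen g hg
  have hwprod : w.prod = y₀ := by
    rw [hw, List.prod_cons, List.prod_append, List.prod_cons, List.prod_replicate, hy₀]
    rw [show (a 2) ^ (-(2 * (k : ℤ))) = ((a 2)⁻¹) ^ (2 * k) from by
      rw [inv_pow, ← zpow_natCast, ← zpow_neg]; norm_cast]
    group
  have hwlen : (w.length : ℤ) = elen P := by
    rw [hw]
    simp only [List.length_cons, List.length_append, List.length_replicate]
    push_cast
    rw [hslen']
    ring
  have hePnonneg : (0 : ℤ) ≤ elen P := by linarith
  set n₀ : ℕ := (elen P).toNat with hn₀def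
  have hn₀ : (n₀ : ℤ) = elen P := Int.toNat_of_nonneg hePnonneg
  have hwlen' : w.length = n₀ := by
    have : (w.length : ℤ) = (n₀ : ℤ) := by rw [hwlen, hn₀]
    exact_mod_cast this
  -- wordLen of any conjugate is at least n₀
  have hwl_ge : ∀ y : B3, IsConj α y → n₀ ≤ wordLen y := by
    intro y hconj
    obtain ⟨s', hs'gen, hs'prod⟩ := exists_word y
    have hne : {n | ∃ s : List B3, s.length = n ∧ (∀ g ∈ s, g ∈ genSet) ∧ s.prod = y}.Nonempty :=
      ⟨s'.length, s', rfl, hs'gen, hs'prod⟩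
    obtain ⟨s'', hs''len, hs''gen, hs''prod⟩ := Nat.sInf_mem hne
    have hlb := lb y hconj s'' hs''gen hs''prod
    rw [hs''len] at hlb
    have h2 : (n₀ : ℤ) ≤ ((sInf {n | ∃ s : List B3, s.length = n ∧ (∀ g ∈ s, g ∈ genSet) ∧
        s.prod = y} : ℕ) : ℤ) := by rw [hn₀]; exact hlb
    have h3' : n₀ ≤ sInf {n | ∃ s : List B3, s.length = n ∧ (∀ g ∈ s, g ∈ genSet) ∧
        s.prod = y} := by exact_mod_cast h2
    unfold wordLen
    exact h3'
  have hwl_y₀ : wordLen y₀ = n₀ := by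
    have hle' : wordLen y₀ ≤ n₀ := by
      unfold wordLen
      apply Nat.sInf_le
      exact ⟨w, hwlen', hwgen, hwprod⟩
    exact le_antisymm hle' (hwl_ge y₀ hconjy)
  have hmcl : minConjLen α = n₀ := by
    unfold minConjLen
    apply le_antisymm
    · apply Nat.sInf_le
      exact ⟨y₀, hconjy, hwl_y₀⟩
    · apply le_csInf
      · exact ⟨n₀, y₀, hconjy, hwl_y₀⟩
      · rintro b ⟨y, hconj, rfl⟩
        exact hwl_ge y hconj
  refine ⟨by rw [hmcl, hn₀], s, hsgen, hslen', ?_⟩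
  exact hconjy
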